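/- Let 0 < s < 1. There exist constants c > 0 and C > 0 such that for every integer n ≥ 2 one has c · n^s ≤ λ_n ≤ C · n^s. -/

import Mathlib

open Real MeasureTheory Finset

/-- The eigenvalues `λ_n` of the linearized radially symmetric non-cutoff Boltzmann operator
with Maxwellian molecules, for the model angular kernel `β(θ) = (sin θ)^{-1-2s} cos θ`. -/
noncomputable def boltzLam (s : ℝ) (n : ℕ) : ℝ :=
  ∫ θ in (0:ℝ)..(Real.pi / 4),
    Real.sin θ ^ (-1 - 2 * s) * Real.cos θ *
      (1 - Real.cos θ ^ (2 * n) - Real.sin θ ^ (2 * n))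

open Set

/-! ### Pointwise bounds on `φ(t) = 1 - (1-t)^n - t^n` -/

lemma phi_nonneg {n : ℕ} (hn : 2 ≤ n) {t : ℝ} (ht : 0 ≤ t) (ht2 : t ≤ 1/2) :
    0 ≤ 1 - (1-t)^n - t^n := by
  have h1 : (1-t)^n ≤ (1-t)^2 := pow_le_pow_of_le_one (by linarith) (by linarith) hn
  have h2 : t^n ≤ t^2 := pow_le_pow_of_le_one ht (by linarith) hn
  nlinarith [sq_nonneg t]

lemma phi_le_nt {n : ℕ} {t : ℝ} (ht : 0 ≤ t) (ht1 : t ≤ 1) :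
    1 - (1-t)^n - t^n ≤ n * t := by
  have h := one_add_mul_le_pow (a := -t) (by linarith) n
  have h2 : (0:ℝ) ≤ t^n := pow_nonneg ht n
  have : (1 + (n:ℝ) * (-t)) ≤ (1-t)^n := by simpa [sub_eq_add_neg] using h
  nlinarith

lemma phi_le_one {n : ℕ} {t : ℝ} (ht : 0 ≤ t) (ht1 : t ≤ 1) :
    1 - (1-t)^n - t^n ≤ 1 := by
  have h1 : (0:ℝ) ≤ (1-t)^n := pow_nonneg (by linarith) n
  have h2 : (0:ℝ) ≤ t^n := pow_nonneg ht n
  linarith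

lemma phi_ge {n : ℕ} (hn : 2 ≤ n) {t : ℝ} (ht : 0 < t) (ht2 : t ≤ 1/2)
    (hnt : (n:ℝ) * t ≤ 1) : (n:ℝ) * t / 4 ≤ 1 - (1-t)^n - t^n := by
  have hb : (1 + (n:ℝ) * t) ≤ (1+t)^n := one_add_mul_le_pow (by linarith) n
  have hP0 : (0:ℝ) ≤ (1-t)^n := pow_nonneg (by linarith) n
  have hkey : (1-t)^n * (1 + (n:ℝ)*t) ≤ 1 := by
    have h1 : (1-t)^n * (1 + (n:ℝ)*t) ≤ (1-t)^n * (1+t)^n :=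
      mul_le_mul_of_nonneg_left hb hP0
    have h2 : (1-t)^n * (1+t)^n = (1-t^2)^n := by rw [← mul_pow]; ring_nf
    have h3 : (1-t^2)^n ≤ 1 := pow_le_one₀ (by nlinarith) (by nlinarith)
    calc (1-t)^n * (1 + (n:ℝ)*t) ≤ (1-t^2)^n := by rw [← h2]; exact h1
      _ ≤ 1 := h3
  have h1P : (n:ℝ) * t / 2 ≤ 1 - (1-t)^n := by
    nlinarith [mul_nonneg hP0 (mul_nonneg (n.cast_nonneg (α := ℝ)) ht.le)]
  have hQ : t^n ≤ t^2 := pow_le_pow_of_le_one ht.le (by linarith) hn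
  have h2t : 2 * t ≤ (n:ℝ) * t := by
    have : (2:ℝ) ≤ n := by exact_mod_cast hn
    nlinarith
  nlinarith

/-! ### The substituted integrand -/

noncomputable def boltzF (s : ℝ) (n : ℕ) (u : ℝ) : ℝ :=
  u ^ (-1 - 2 * s) * (1 - (1 - u^2)^n - u^(2*n))

lemma sin_image_Ioc : Real.sin '' Ioc 0 (Real.pi/4) = Ioc 0 (Real.sqrt 2 / 2) := by
  have hpi := Real.pi_pos
  ext y
  constructor
  · rintro ⟨θ, hθ, rfl⟩
    refine ⟨Real.sin_pos_of_pos_of_lt_pi hθ.1 (by linarith [hθ.2]), ?_⟩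
    rw [← Real.sin_pi_div_four]
    exact Real.strictMonoOn_sin.monotoneOn ⟨by linarith [hθ.1], by linarith [hθ.2]⟩
      ⟨by linarith, by linarith⟩ hθ.2
  · rintro ⟨hy0, hy1⟩
    have hs2 : Real.sqrt 2 / 2 ≤ 1 := by
      nlinarith [Real.sq_sqrt (by norm_num : (2:ℝ) ≥ 0), Real.sqrt_nonneg 2,
        Real.sqrt_lt_sqrt (by norm_num) (by norm_num : (2:ℝ) < 4)]
    refine ⟨Real.arcsin y, ⟨Real.arcsin_pos.2 hy0, ?_⟩, Real.sin_arcsin (by linarith) (by linarith)⟩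
    have : Real.arcsin y ≤ Real.arcsin (Real.sqrt 2 / 2) := Real.monotone_arcsin hy1
    rwa [← Real.sin_pi_div_four, Real.arcsin_sin (by linarith) (by linarith)] at this

lemma boltzLam_eq (s : ℝ) (n : ℕ) :
    boltzLam s n = ∫ u in Ioc (0:ℝ) (Real.sqrt 2 / 2), boltzF s n u := by
  have hpi := Real.pi_pos
  rw [boltzLam, intervalIntegral.integral_of_le (by linarith)]
  rw [← sin_image_Ioc,
    integral_image_eq_integral_abs_deriv_smul measurableSet_Ioc
      (fun θ _ => (Real.hasDerivAt_sin θ).hasDerivWithinAt)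
      (Real.injOn_sin.mono (fun θ hθ => Set.mem_Icc.2
        ⟨by linarith [(Set.mem_Ioc.1 hθ).1], by linarith [(Set.mem_Ioc.1 hθ).2]⟩))]
  refine setIntegral_congr_fun measurableSet_Ioc (fun θ hθ => ?_)
  have hcos : 0 < Real.cos θ :=
    Real.cos_pos_of_mem_Ioo (Set.mem_Ioo.2
      ⟨by linarith [(Set.mem_Ioc.1 hθ).1], by linarith [(Set.mem_Ioc.1 hθ).2]⟩)
  rw [smul_eq_mul, abs_of_pos hcos, boltzF]
  have h1 : (1 - Real.sin θ ^ 2) ^ n = Real.cos θ ^ (2 * n) := by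
    rw [pow_mul, Real.cos_sq']
  rw [h1]
  ring

/-! ### Basic integrals of `rpow` -/

lemma int_rpow_head {r : ℝ} (hr : -1 < r) {a : ℝ} (ha : 0 < a) :
    ∫ u in Ioc (0:ℝ) a, u ^ r = a ^ (r+1) / (r+1) := by
  rw [← intervalIntegral.integral_of_le ha.le, integral_rpow (Or.inl hr),
    Real.zero_rpow (by linarith), sub_zero]

lemma int_rpow_tail {r : ℝ} (hr : r ≠ -1) {a b : ℝ} (ha : 0 < a) (hab : a ≤ b) :
    ∫ u in Ioc a b, u ^ r = (b ^ (r+1) - a ^ (r+1)) / (r+1) := by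
  rw [← intervalIntegral.integral_of_le hab,
    integral_rpow (Or.inr ⟨hr, Set.notMem_uIcc_of_lt ha (lt_of_lt_of_le ha hab)⟩)]

lemma intOn_rpow {r : ℝ} (hr : -1 < r) (a : ℝ) :
    IntegrableOn (fun u : ℝ => u ^ r) (Ioc 0 a) := by
  rcases le_or_gt a 0 with h | h
  · rw [Set.Ioc_eq_empty (not_lt.2 h)]
    exact integrableOn_empty
  · have := intervalIntegral.intervalIntegrable_rpow' (r := r) hr (a := 0) (b := a)
    rwa [intervalIntegrable_iff_integrableOn_Ioc_of_le h.le] at this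

lemma intOn_rpow_tail {r : ℝ} {a b : ℝ} (ha : 0 < a) :
    IntegrableOn (fun u : ℝ => u ^ r) (Ioc a b) := by
  rcases le_or_gt b a with h | h
  · simp [Set.Ioc_eq_empty (not_lt.2 h)]
  · refine (ContinuousOn.integrableOn_compact isCompact_Icc ?_).mono_set Set.Ioc_subset_Icc_self
    exact ContinuousOn.rpow_const continuousOn_id
      (fun x hx => Or.inl (ne_of_gt (lt_of_lt_of_le ha hx.1)))

lemma boltzF_meas (s : ℝ) (n : ℕ) : Measurable (boltzF s n) := by
  unfold boltzF; fun_prop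

lemma rpow_shift {s u : ℝ} (hu : 0 < u) : u ^ (-1-2*s) * u^2 = u ^ (1-2*s) := by
  rw [← Real.rpow_natCast u 2, ← Real.rpow_add hu]
  norm_num
  ring_nf

/-! ### Pointwise bounds on `boltzF` -/

lemma boltzF_eq (s : ℝ) (n : ℕ) (u : ℝ) :
    boltzF s n u = u ^ (-1-2*s) * (1 - (1-u^2)^n - (u^2)^n) := by
  rw [boltzF, pow_mul]

lemma u_sq_le_half {u : ℝ} (hu : u ∈ Ioc (0:ℝ) (Real.sqrt 2 / 2)) : u^2 ≤ 1/2 := by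
  have h2 : (Real.sqrt 2 / 2)^2 = 1/2 := by
    rw [div_pow, Real.sq_sqrt (by norm_num : (0:ℝ) ≤ 2)]; norm_num
  calc u^2 ≤ (Real.sqrt 2 / 2)^2 := pow_le_pow_left₀ hu.1.le hu.2 2
    _ = 1/2 := h2

lemma boltzF_nonneg {s : ℝ} {n : ℕ} (hn : 2 ≤ n) {u : ℝ}
    (hu : u ∈ Ioc (0:ℝ) (Real.sqrt 2 / 2)) : 0 ≤ boltzF s n u := by
  rw [boltzF_eq]
  exact mul_nonneg (Real.rpow_nonneg hu.1.le _)
    (phi_nonneg hn (sq_nonneg u) (u_sq_le_half hu))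

lemma boltzF_le_mid {s : ℝ} {n : ℕ} {u : ℝ}
    (hu : u ∈ Ioc (0:ℝ) (Real.sqrt 2 / 2)) :
    boltzF s n u ≤ (n:ℝ) * u ^ (1-2*s) := by
  rw [boltzF_eq]
  have h1 : (1 - (1-u^2)^n - (u^2)^n) ≤ (n:ℝ) * u^2 :=
    phi_le_nt (sq_nonneg u) (by linarith [u_sq_le_half hu])
  calc u ^ (-1-2*s) * (1 - (1-u^2)^n - (u^2)^n)
      ≤ u ^ (-1-2*s) * ((n:ℝ) * u^2) :=
        mul_le_mul_of_nonneg_left h1 (Real.rpow_nonneg hu.1.le _)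
    _ = (n:ℝ) * (u ^ (-1-2*s) * u^2) := by ring
    _ = (n:ℝ) * u ^ (1-2*s) := by rw [rpow_shift hu.1]

lemma boltzF_le_tail {s : ℝ} {n : ℕ} {u : ℝ}
    (hu : u ∈ Ioc (0:ℝ) (Real.sqrt 2 / 2)) :
    boltzF s n u ≤ u ^ (-1-2*s) := by
  rw [boltzF_eq]
  have h1 : (1 - (1-u^2)^n - (u^2)^n) ≤ 1 :=
    phi_le_one (sq_nonneg u) (by linarith [u_sq_le_half hu])
  calc u ^ (-1-2*s) * (1 - (1-u^2)^n - (u^2)^n)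
      ≤ u ^ (-1-2*s) * 1 := mul_le_mul_of_nonneg_left h1 (Real.rpow_nonneg hu.1.le _)
    _ = u ^ (-1-2*s) := mul_one _

lemma boltzF_ge {s : ℝ} {n : ℕ} (hn : 2 ≤ n) {u : ℝ}
    (hu : u ∈ Ioc (0:ℝ) (Real.sqrt 2 / 2)) (hun : (n:ℝ) * u^2 ≤ 1) :
    (n:ℝ)/4 * u ^ (1-2*s) ≤ boltzF s n u := by
  rw [boltzF_eq]
  have h1 : (n:ℝ) * u^2 / 4 ≤ (1 - (1-u^2)^n - (u^2)^n) :=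
    phi_ge hn (pow_pos hu.1 2) (u_sq_le_half hu) hun
  calc (n:ℝ)/4 * u ^ (1-2*s) = u ^ (-1-2*s) * ((n:ℝ) * u^2 / 4) := by
        rw [← rpow_shift hu.1]; ring
    _ ≤ u ^ (-1-2*s) * (1 - (1-u^2)^n - (u^2)^n) :=
        mul_le_mul_of_nonneg_left h1 (Real.rpow_nonneg hu.1.le _)

/-! ### Main theorem -/

theorem lam_asymptotics (s : ℝ) (hs : 0 < s) (hs1 : s < 1) :
    ∃ c > 0, ∃ C > 0, ∀ n : ℕ, 2 ≤ n →
      c * (n : ℝ) ^ s ≤ boltzLam s n ∧ boltzLam s n ≤ C * (n : ℝ) ^ s := by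
  have hs1' : 0 < 1 - s := by linarith
  refine ⟨1/(8*(1-s)), by positivity, 1/(2-2*s) + 1/(2*s), add_pos (div_pos one_pos (by linarith)) (div_pos one_pos (by linarith)), fun n hn => ?_⟩
  have hn0 : (0:ℝ) < n := by
    have : (2:ℝ) ≤ n := by exact_mod_cast hn
    linarith
  set b : ℝ := Real.sqrt 2 / 2 with hbdef
  set a : ℝ := (n:ℝ) ^ (-(1/2) : ℝ) with hadef
  have ha0 : 0 < a := Real.rpow_pos_of_pos hn0 _
  have hb0 : 0 < b := by positivity
  have ha_inv : a = (Real.sqrt n)⁻¹ := by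
    rw [hadef, Real.rpow_neg hn0.le, ← Real.sqrt_eq_rpow]
  have hab : a ≤ b := by
    have h2 : Real.sqrt 2 * Real.sqrt 2 = 2 := Real.mul_self_sqrt (by norm_num)
    have hs2 : (0:ℝ) < Real.sqrt 2 := Real.sqrt_pos.2 (by norm_num)
    have hbinv : b = (Real.sqrt 2)⁻¹ := by
      rw [hbdef, eq_comm, inv_eq_iff_eq_inv, eq_comm, inv_div]
      rw [div_eq_iff hs2.ne', h2]
    rw [ha_inv, hbinv]
    exact inv_anti₀ hs2 (Real.sqrt_le_sqrt (by exact_mod_cast hn))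
  have ha_sq : a^2 = ((n:ℝ))⁻¹ := by
    rw [ha_inv, inv_pow, Real.sq_sqrt hn0.le]
  -- rpow identities for a
  have hA : a ^ ((1-2*s)+1) = (n:ℝ) ^ (s-1) := by
    rw [hadef, ← Real.rpow_mul hn0.le]
    congr 1; ring
  have hB : a ^ ((-1-2*s)+1) = (n:ℝ) ^ s := by
    rw [hadef, ← Real.rpow_mul hn0.le]
    congr 1; ring
  have hns : (0:ℝ) < (n:ℝ) ^ s := Real.rpow_pos_of_pos hn0 s
  have hmul : (n:ℝ) ^ s = (n:ℝ) * (n:ℝ) ^ (s-1) := by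
    rw [show s = 1 + (s-1) by ring, Real.rpow_add hn0, Real.rpow_one]
    ring_nf
  -- integrability
  have hIntF : IntegrableOn (boltzF s n) (Ioc 0 b) := by
    have hg : IntegrableOn (fun u : ℝ => (n:ℝ) * u ^ (1-2*s)) (Ioc 0 b) :=
      (intOn_rpow (by linarith) b).const_mul _
    refine hg.mono' ((boltzF_meas s n).aestronglyMeasurable.restrict) ?_
    rw [ae_restrict_iff' measurableSet_Ioc]
    filter_upwards with u hu
    rw [Real.norm_eq_abs, abs_of_nonneg (boltzF_nonneg hn hu)]
    exact boltzF_le_mid hu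
  have hsub : Ioc (0:ℝ) a ⊆ Ioc 0 b := Set.Ioc_subset_Ioc_right hab
  have hsub2 : Ioc a b ⊆ Ioc (0:ℝ) b := Set.Ioc_subset_Ioc_left ha0.le
  -- value of the head integral
  have hval : ∫ u in Ioc (0:ℝ) a, (n:ℝ) * u ^ (1-2*s)
      = 1/(2-2*s) * (n:ℝ) ^ s := by
    rw [MeasureTheory.integral_const_mul, int_rpow_head (by linarith) ha0, hA, hmul]
    have d1 : (1-2*s+1) ≠ 0 := by intro h; nlinarith
    have d2 : (2-2*s) ≠ 0 := by intro h; nlinarith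
    field_simp
    have d3 : (2 - s*2) ≠ 0 := by intro h; nlinarith
    field_simp
    ring
  -- lower bound
  have hlow : 1/(8*(1-s)) * (n:ℝ) ^ s ≤ boltzLam s n := by
    have h2 : ∫ u in Ioc (0:ℝ) a, (n:ℝ)/4 * u ^ (1-2*s)
        ≤ ∫ u in Ioc (0:ℝ) a, boltzF s n u := by
      refine setIntegral_mono_on ((intOn_rpow (by linarith) a).const_mul _)
        (hIntF.mono_set hsub) measurableSet_Ioc (fun u hu => ?_)
      refine boltzF_ge hn (hsub hu) ?_
      have : u^2 ≤ a^2 := pow_le_pow_left₀ hu.1.le hu.2 2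
      rw [ha_sq] at this
      calc (n:ℝ) * u^2 ≤ (n:ℝ) * (n:ℝ)⁻¹ := mul_le_mul_of_nonneg_left this hn0.le
        _ = 1 := mul_inv_cancel₀ hn0.ne'
    have h1 : ∫ u in Ioc (0:ℝ) a, boltzF s n u ≤ ∫ u in Ioc (0:ℝ) b, boltzF s n u := by
      refine setIntegral_mono_set hIntF ?_ (HasSubset.Subset.eventuallyLE hsub)
      rw [Filter.EventuallyLE, ae_restrict_iff' measurableSet_Ioc]
      filter_upwards with u hu
      exact boltzF_nonneg hn hu
    have hval4 : ∫ u in Ioc (0:ℝ) a, (n:ℝ)/4 * u ^ (1-2*s)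
        = 1/(8*(1-s)) * (n:ℝ) ^ s := by
      rw [MeasureTheory.integral_const_mul, int_rpow_head (by linarith) ha0, hA, hmul]
      have d1 : (1-2*s+1) ≠ 0 := by intro h; nlinarith
      have d2 : (8*(1-s)) ≠ 0 := by intro h; nlinarith
      field_simp
      have d3 : (2 - s*2) ≠ 0 := by intro h; nlinarith
      linear_combination 4 * mul_inv_cancel₀ d3
    rw [boltzLam_eq, ← hbdef, ← hval4]
    exact le_trans h2 h1
  -- upper bound
  have hup : boltzLam s n ≤ (1/(2-2*s) + 1/(2*s)) * (n:ℝ) ^ s := by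
    have hsplit : ∫ u in Ioc (0:ℝ) b, boltzF s n u
        = (∫ u in Ioc (0:ℝ) a, boltzF s n u) + ∫ u in Ioc a b, boltzF s n u := by
      rw [← Set.Ioc_union_Ioc_eq_Ioc ha0.le hab]
      exact setIntegral_union (Set.Ioc_disjoint_Ioc_of_le le_rfl) measurableSet_Ioc
        (hIntF.mono_set hsub) (hIntF.mono_set hsub2)
    have hhead : ∫ u in Ioc (0:ℝ) a, boltzF s n u ≤ 1/(2-2*s) * (n:ℝ) ^ s := by
      rw [← hval]
      refine setIntegral_mono_on (hIntF.mono_set hsub)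
        ((intOn_rpow (by linarith) a).const_mul _) measurableSet_Ioc (fun u hu => ?_)
      exact boltzF_le_mid (hsub hu)
    have htail : ∫ u in Ioc a b, boltzF s n u ≤ 1/(2*s) * (n:ℝ) ^ s := by
      have h1 : ∫ u in Ioc a b, boltzF s n u ≤ ∫ u in Ioc a b, u ^ (-1-2*s) := by
        refine setIntegral_mono_on (hIntF.mono_set hsub2)
          (intOn_rpow_tail ha0) measurableSet_Ioc (fun u hu => ?_)
        exact boltzF_le_tail (hsub2 hu)
      have h2 : ∫ u in Ioc a b, u ^ (-1-2*s)
          = (b ^ ((-1-2*s)+1) - (n:ℝ) ^ s) / ((-1-2*s)+1) := by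
        rw [int_rpow_tail (by intro hc; rw [sub_eq_iff_eq_add] at hc; nlinarith) ha0 hab, hB]
      have hbpow : (0:ℝ) ≤ b ^ (-(2*s)) := Real.rpow_nonneg hb0.le _
      have h3 : (b ^ ((-1-2*s)+1) - (n:ℝ) ^ s) / ((-1-2*s)+1) ≤ 1/(2*s) * (n:ℝ) ^ s := by
        rw [show (-1-2*s)+1 = -(2*s) by ring,
          div_le_iff_of_neg (by linarith : -(2*s) < 0)]
        have hc : 1/(2*s) * (n:ℝ)^s * -(2*s) = -((n:ℝ)^s) := by
          field_simp
        rw [hc]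
        linarith
      linarith
    rw [boltzLam_eq, ← hbdef, hsplit]
    linarith
  exact ⟨hlow, hup⟩
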